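/- arXiv:1112.5892 — 4 statements merged into one kernel-verified Lean document; each statement's English description precedes it below -/
import Mathlib

section
/- Let G be a finite non-cyclic group and H a maximal subgroup of G with σ(H) > σ(G). Then H belongs to every minimal cover of G, i.e. every family of σ(G) proper subgroups of G whose union is G contains H as a member. -/
/-- A cover of a group `G`: a finite family of proper subgroups whose union is all of `G`. -/
def IsCover {G : Type*} [Group G] (𝒮 : Finset (Subgroup G)) : Prop :=
  (∀ H ∈ 𝒮, H ≠ ⊤) ∧ ∀ g : G, ∃ H ∈ 𝒮, g ∈ H

/-- `groupSigma G` is the least cardinality of a cover of `G`, and `⊤` if no cover exists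
(e.g. if `G` is cyclic). -/
noncomputable def groupSigma (G : Type*) [Group G] : ℕ∞ :=
  sInf {n : ℕ∞ | ∃ 𝒮 : Finset (Subgroup G), IsCover 𝒮 ∧ (𝒮.card : ℕ∞) = n}

/-- If `H` is a maximal subgroup of a finite non-cyclic group `G` with `σ(H) > σ(G)`, then `H`
belongs to every minimal cover of `G`. -/
theorem maximal_mem_minimal_cover
    {G : Type*} [Group G] [Finite G] (hG : ¬ IsCyclic G)
    (H : Subgroup G) (hmax : IsCoatom H) (hσ : groupSigma G < groupSigma ↥H) :
    ∀ 𝒮 : Finset (Subgroup G), IsCover 𝒮 → (𝒮.card : ℕ∞) = groupSigma G → H ∈ 𝒮 := by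
  intro 𝒮 hcov hcard
  by_contra hH
  -- Build a cover of H from intersections with members of 𝒮
  classical
  set 𝒯 : Finset (Subgroup ↥H) := 𝒮.image (fun K => K.subgroupOf H) with h𝒯
  have hcovT : IsCover 𝒯 := by
    constructor
    · intro K' hK'
      obtain ⟨K, hK, rfl⟩ := Finset.mem_image.mp hK'
      intro htop
      rw [Subgroup.subgroupOf_eq_top] at htop
      have hne : H ≠ K := by rintro rfl; exact hH hK
      exact hcov.1 K hK (hmax.2 K (lt_of_le_of_ne htop hne))
    · intro h
      obtain ⟨K, hK, hKmem⟩ := hcov.2 (h : G)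
      exact ⟨K.subgroupOf H, Finset.mem_image_of_mem _ hK, hKmem⟩
  have h1 : groupSigma ↥H ≤ (𝒯.card : ℕ∞) := sInf_le ⟨𝒯, hcovT, rfl⟩
  have h2 : (𝒯.card : ℕ∞) ≤ (𝒮.card : ℕ∞) := by
    exact_mod_cast Finset.card_image_le
  exact absurd (h1.trans (h2.trans_eq hcard)) (not_le.mpr hσ)
end

section
/- Let G be a finite non-cyclic group and H a maximal subgroup of G that is not normal in G. If σ(H) < [G : H] (the index of H in G), then σ(G) ≥ σ(H). -/
/-- If `H` is a maximal non-normal subgroup of a finite non-cyclic group `G` with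
`σ(H) < [G : H]`, then `σ(G) ≥ σ(H)`. -/
theorem sigma_ge_of_maximal_not_normal
    {G : Type*} [Group G] [Finite G] (hG : ¬ IsCyclic G)
    (H : Subgroup G) (hmax : IsCoatom H) (hnn : ¬ H.Normal)
    (hlt : groupSigma ↥H < (H.index : ℕ∞)) :
    groupSigma ↥H ≤ groupSigma G := by
  classical
  by_contra hcon
  push_neg at hcon
  -- σ(G) < σ(H) < ⊤, so there is a cover of G of size σ(G)
  have hGtop : groupSigma G < ⊤ := hcon.trans (hlt.trans_le le_top)
  have hne : {n : ℕ∞ | ∃ 𝒮 : Finset (Subgroup G), IsCover 𝒮 ∧ (𝒮.card : ℕ∞) = n}.Nonempty := by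
    by_contra h
    rw [Set.not_nonempty_iff_eq_empty] at h
    rw [groupSigma, h, sInf_empty] at hGtop
    exact absurd rfl hGtop.ne
  obtain ⟨𝒮, hcov, hcard⟩ := csInf_mem hne
  -- normalizer H = H
  have hnorm : Subgroup.normalizer (H : Set G) = H := by
    by_contra h
    exact hnn (Subgroup.normalizer_eq_top_iff.mp
      (hmax.2 _ (lt_of_le_of_ne H.le_normalizer (Ne.symm h))))
  -- the conjugation map
  set f : G → Subgroup G := fun g => H.map (MulAut.conj g).toMonoidHom with hf
  have hmemf : ∀ (a z : G), z ∈ f a ↔ a⁻¹ * z * a ∈ H := by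
    intro a z
    constructor
    · rintro ⟨y, hy, rfl⟩
      simp only [MulEquiv.coe_toMonoidHom, MulAut.conj_apply]
      have e : a⁻¹ * (a * y * a⁻¹) * a = y := by group
      rwa [e]
    · intro hz
      refine ⟨a⁻¹ * z * a, hz, ?_⟩
      simp only [MulEquiv.coe_toMonoidHom, MulAut.conj_apply]
      group
  -- every conjugate of H belongs to 𝒮
  have hmem : ∀ g : G, f g ∈ 𝒮 := by
    intro g
    by_contra hg
    -- build a cover of H of size ≤ |𝒮|
    set φ : ↥H →* G := ((MulAut.conj g).toMonoidHom).comp H.subtype with hφ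
    set T : Finset (Subgroup ↥H) := 𝒮.image (fun K => K.comap φ) with hT
    have hTcov : IsCover T := by
      constructor
      · intro K' hK'
        rw [hT, Finset.mem_image] at hK'
        obtain ⟨K, hK, rfl⟩ := hK'
        intro htop
        have hle : f g ≤ K := by
          rintro x ⟨y, hy, rfl⟩
          have : (⟨y, hy⟩ : ↥H) ∈ K.comap φ := htop ▸ Subgroup.mem_top _
          exact this
        have hKc : K.comap (MulAut.conj g).toMonoidHom ≠ ⊤ := by
          intro h
          apply hcov.1 K hK
          have h2 := Subgroup.map_comap_eq_self_of_surjective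
            (f := (MulAut.conj g).toMonoidHom) (MulAut.conj g).surjective K
          rw [h] at h2
          rw [← h2]
          exact Subgroup.map_top_of_surjective (MulAut.conj g).toMonoidHom
            (MulAut.conj g).surjective
        have hHle : H ≤ K.comap (MulAut.conj g).toMonoidHom := by
          intro x hx
          exact hle ⟨x, hx, rfl⟩
        have hEq : K.comap (MulAut.conj g).toMonoidHom = H := by
          rcases eq_or_lt_of_le hHle with h | h
          · exact h.symm
          · exact absurd (hmax.2 _ h) hKc
        have : K = f g := by
          have h2 := Subgroup.map_comap_eq_self_of_surjective
            (f := (MulAut.conj g).toMonoidHom) (MulAut.conj g).surjective K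
          rw [hEq] at h2
          exact h2.symm
        exact hg (this ▸ hK)
      · intro x
        obtain ⟨K, hK, hxK⟩ := hcov.2 (φ x)
        exact ⟨K.comap φ, Finset.mem_image_of_mem _ hK, hxK⟩
    have h1 : groupSigma ↥H ≤ (T.card : ℕ∞) := sInf_le ⟨T, hTcov, rfl⟩
    have h2 : (T.card : ℕ∞) ≤ (𝒮.card : ℕ∞) := by
      rw [hT]; exact_mod_cast Finset.card_image_le
    rw [hcard] at h2
    exact absurd ((h1.trans h2).trans_lt hcon) (lt_irrefl _)
  -- f g = f g' → same left coset
  have hinj : ∀ g g' : G, f g = f g' → g⁻¹ * g' ∈ H := by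
    intro g g' h
    rw [← hnorm, Subgroup.mem_normalizer_iff]
    intro x
    have e1 : g'⁻¹ * (g' * x * g'⁻¹) * g' = x := by group
    have e2 : (g⁻¹ * g') * x * (g⁻¹ * g')⁻¹ = g⁻¹ * (g' * x * g'⁻¹) * g := by group
    calc x ∈ H ↔ g' * x * g'⁻¹ ∈ f g' := by rw [hmemf, e1]
      _ ↔ g' * x * g'⁻¹ ∈ f g := by rw [h]
      _ ↔ (g⁻¹ * g') * x * (g⁻¹ * g')⁻¹ ∈ H := by rw [hmemf, e2]
  -- same left coset → f g = f g'
  have hfeq : ∀ g g' : G, g⁻¹ * g' ∈ H → f g = f g' := by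
    intro g g' hn
    ext z
    rw [hmemf, hmemf]
    constructor
    · intro hz
      have e : g'⁻¹ * z * g' = (g⁻¹ * g')⁻¹ * (g⁻¹ * z * g) * (g⁻¹ * g') := by group
      rw [e]
      exact H.mul_mem (H.mul_mem (H.inv_mem hn) hz) hn
    · intro hz
      have e : g⁻¹ * z * g = (g⁻¹ * g') * (g'⁻¹ * z * g') * (g⁻¹ * g')⁻¹ := by group
      rw [e]
      exact H.mul_mem (H.mul_mem hn hz) (H.inv_mem hn)
  -- injection from G ⧸ H into 𝒮
  let F : G ⧸ H → {K : Subgroup G // K ∈ 𝒮} := fun q =>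
    Quotient.liftOn' q (fun g => (⟨f g, hmem g⟩ : {K : Subgroup G // K ∈ 𝒮}))
      (fun a b hab => Subtype.ext (hfeq a b (QuotientGroup.leftRel_apply.mp hab)))
  have hFinj : Function.Injective F := by
    intro q q'
    induction q using Quotient.inductionOn' with
    | h a =>
      induction q' using Quotient.inductionOn' with
      | h b =>
        intro h
        exact Quotient.sound' (QuotientGroup.leftRel_apply.mpr
          (hinj a b (congrArg Subtype.val h)))
  have hidx : H.index ≤ 𝒮.card := by
    have h1 := Nat.card_le_card_of_injective F hFinj
    have h2 : Nat.card {K : Subgroup G // K ∈ 𝒮} = 𝒮.card := by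
      rw [Nat.card_eq_fintype_card, Fintype.card_coe]
    rw [h2] at h1
    exact h1
  have hcard' : (𝒮.card : ℕ∞) = groupSigma G := hcard
  have hfin : (H.index : ℕ∞) ≤ groupSigma G := by
    rw [← hcard']
    exact_mod_cast hidx
  exact absurd ((hfin.trans_lt hcon).trans hlt) (lt_irrefl _)
end

section
/- Let H be a finite group and V a finite H-module (a finite abelian group on which H acts by automorphisms) with C_V(H) = 0. If σ(H) ≥ 2|V|, then the first cohomology group H¹(H, V) is trivial. -/
/-- If `H` is a finite group and `V` a finite `H`-module with `C_V(H) = 0` and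
`σ(H) ≥ 2|V|`, then `H¹(H,V) = 0`: every `1`-cocycle `d : H → V` is a `1`-coboundary. -/
theorem H1_eq_zero_of_two_card_le_sigma
    {H V : Type*} [Group H] [Finite H] [AddCommGroup V] [Finite V] [DistribMulAction H V]
    (hfix : ∀ v : V, (∀ h : H, h • v = v) → v = 0)
    (hσ : (2 * Nat.card V : ℕ∞) ≤ groupSigma H) :
    ∀ d : H → V, (∀ g h : H, d (g * h) = d g + g • d h) →
      ∃ v : V, ∀ g : H, d g = g • v - v := by
  classical
  intro d hd
  by_contra hcon
  push_neg at hcon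
  -- hcon : ∀ v, ∃ g, d g ≠ g • v - v
  haveI : Fintype V := Fintype.ofFinite V
  have hd1 : d 1 = 0 := by
    have h := hd 1 1
    simp only [one_mul, one_smul] at h
    exact (left_eq_add.mp h)
  -- the subgroup of elements where `v` works
  let A : V → Subgroup H := fun v =>
    { carrier := {g | d g = g • v - v}
      one_mem' := by simp [hd1]
      mul_mem' := by
        intro a b ha hb
        simp only [Set.mem_setOf_eq] at ha hb ⊢
        rw [hd a b, ha, hb, smul_sub, mul_smul]
        abel
      inv_mem' := by
        intro a ha
        simp only [Set.mem_setOf_eq] at ha ⊢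
        have h0 : d a + a • d a⁻¹ = 0 := by
          have := hd a a⁻¹
          rw [mul_inv_cancel, hd1] at this
          exact this.symm
        have h1 : a • d a⁻¹ = v - a • v := by
          rw [ha] at h0
          have := eq_neg_of_add_eq_zero_right h0
          rw [this]; abel
        have h2 : a⁻¹ • (a • d a⁻¹) = a⁻¹ • (v - a • v) := by rw [h1]
        rw [inv_smul_smul, smul_sub, inv_smul_smul] at h2
        exact h2 }
  have hAmem : ∀ v (g : H), g ∈ A v ↔ d g = g • v - v := fun v g => Iff.rfl
  -- each A v is proper
  have hAprop : ∀ v, A v ≠ ⊤ := by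
    intro v htop
    obtain ⟨g, hg⟩ := hcon v
    exact hg ((hAmem v g).mp (htop ▸ Subgroup.mem_top g))
  -- stabilizers of nonzero vectors are proper
  have hSprop : ∀ v : V, v ≠ 0 → MulAction.stabilizer H v ≠ ⊤ := by
    intro v hv htop
    exact hv (hfix v (fun h => by
      have : h ∈ MulAction.stabilizer H v := htop ▸ Subgroup.mem_top h
      exact this))
  -- every g is in some A v or some stabilizer of a nonzero v
  have hcov : ∀ g : H, (∃ v, g ∈ A v) ∨ (∃ v : V, v ≠ 0 ∧ g ∈ MulAction.stabilizer H v) := by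
    intro g
    by_cases hg : ∃ v, d g = g • v - v
    · exact Or.inl hg
    · right
      push_neg at hg
      -- the map v ↦ g • v - v is not surjective, hence not injective
      have hnotinj : ¬ Function.Injective (fun v : V => g • v - v) := by
        intro hinj
        have hsurj := Finite.surjective_of_injective hinj
        obtain ⟨v, hv⟩ := hsurj (d g)
        exact hg v hv.symm
      rw [Function.not_injective_iff] at hnotinj
      obtain ⟨v, w, hvw, hne⟩ := hnotinj
      refine ⟨v - w, sub_ne_zero_of_ne hne, ?_⟩
      have : g • v - v = g • w - w := hvw
      have h2 : g • (v - w) = v - w := by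
        rw [smul_sub]
        have := sub_eq_sub_iff_sub_eq_sub.mp this
        -- g • v - g • w = v - w
        rw [sub_eq_sub_iff_sub_eq_sub] at this
        abel_nf
        abel_nf at this
        linear_combination (norm := abel) this
      exact h2
  -- build the cover
  set 𝒮 : Finset (Subgroup H) :=
    (Finset.univ.image A) ∪
      ((Finset.univ.filter (fun v : V => v ≠ 0)).image (fun v => MulAction.stabilizer H v)) with h𝒮
  have hcover : IsCover 𝒮 := by
    constructor
    · intro K hK
      rw [h𝒮, Finset.mem_union] at hK
      rcases hK with hK | hK
      · obtain ⟨v, _, rfl⟩ := Finset.mem_image.mp hK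
        exact hAprop v
      · obtain ⟨v, hv, rfl⟩ := Finset.mem_image.mp hK
        exact hSprop v (Finset.mem_filter.mp hv).2
    · intro g
      rcases hcov g with ⟨v, hv⟩ | ⟨v, hv0, hv⟩
      · exact ⟨A v, Finset.mem_union_left _ (Finset.mem_image.mpr ⟨v, Finset.mem_univ v, rfl⟩), hv⟩
      · exact ⟨MulAction.stabilizer H v,
          Finset.mem_union_right _ (Finset.mem_image.mpr
            ⟨v, Finset.mem_filter.mpr ⟨Finset.mem_univ v, hv0⟩, rfl⟩), hv⟩
  -- cardinality bound
  have hn : Nat.card V = Fintype.card V := Nat.card_eq_fintype_card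
  have hcard : 𝒮.card < 2 * Nat.card V := by
    rw [h𝒮]
    have h1 : (Finset.univ.image A).card ≤ Fintype.card V := by
      calc (Finset.univ.image A).card ≤ (Finset.univ : Finset V).card := Finset.card_image_le
        _ = Fintype.card V := Finset.card_univ
    have h2 : ((Finset.univ.filter (fun v : V => v ≠ 0)).image
        (fun v => MulAction.stabilizer H v)).card ≤ Fintype.card V - 1 := by
      calc ((Finset.univ.filter (fun v : V => v ≠ 0)).image
            (fun v => MulAction.stabilizer H v)).card
          ≤ (Finset.univ.filter (fun v : V => v ≠ 0)).card := Finset.card_image_le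
        _ ≤ ((Finset.univ : Finset V).erase 0).card := by
            apply Finset.card_le_card
            intro v hv
            rw [Finset.mem_filter] at hv
            exact Finset.mem_erase.mpr ⟨hv.2, hv.1⟩
        _ = Fintype.card V - 1 := by
            rw [Finset.card_erase_of_mem (Finset.mem_univ 0), Finset.card_univ]
    have hpos : 0 < Fintype.card V := Fintype.card_pos
    have := Finset.card_union_le (Finset.univ.image A)
      ((Finset.univ.filter (fun v : V => v ≠ 0)).image (fun v => MulAction.stabilizer H v))
    rw [hn]
    omega
  -- conclude
  have hle : groupSigma H ≤ (𝒮.card : ℕ∞) :=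
    sInf_le ⟨𝒮, hcover, rfl⟩
  have : (2 * Nat.card V : ℕ∞) ≤ (𝒮.card : ℕ∞) := le_trans hσ hle
  have hlt : (𝒮.card : ℕ∞) < (2 * Nat.card V : ℕ∞) := by exact_mod_cast hcard
  exact absurd this (not_le_of_gt hlt)
end

section
/- The symmetric group Sym(12) on 12 letters satisfies σ(Sym(12)) ≥ 67. -/
set_option maxRecDepth 10000


open Equiv Equiv.Perm Finset List

namespace Sym12

abbrev G12 := Equiv.Perm (Fin 12)

def tbl : List ((Fin 12 × Fin 12) × List (Fin 12)) := [((0,1),[2,3,4]),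
  ((0,2),[1,3,5]),
  ((0,3),[1,2,6]),
  ((0,4),[1,2,5]),
  ((0,5),[1,2,7]),
  ((0,6),[1,2,4]),
  ((0,7),[1,2,3]),
  ((0,8),[1,2,9]),
  ((0,9),[1,2,10]),
  ((0,10),[1,2,8]),
  ((0,11),[1,3,4]),
  ((1,2),[0,3,8]),
  ((1,3),[0,2,9]),
  ((1,4),[0,2,7]),
  ((1,5),[0,2,6]),
  ((1,6),[0,2,8]),
  ((1,7),[0,2,10]),
  ((1,8),[0,2,4]),
  ((1,9),[0,2,5]),
  ((1,10),[0,2,3]),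
  ((1,11),[0,3,5]),
  ((2,3),[0,1,11]),
  ((2,4),[0,1,9]),
  ((2,5),[0,1,8]),
  ((2,6),[0,1,7]),
  ((2,7),[0,3,4]),
  ((2,8),[0,3,6]),
  ((2,9),[0,1,6]),
  ((2,10),[0,1,4]),
  ((2,11),[0,1,5]),
  ((3,4),[0,1,10]),
  ((3,5),[0,2,11]),
  ((3,6),[0,4,5]),
  ((3,7),[0,4,6]),
  ((3,8),[0,4,7]),
  ((3,9),[0,4,8]),
  ((3,10),[0,4,9]),
  ((3,11),[0,4,10]),
  ((4,5),[0,1,3]),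
  ((4,6),[0,3,9]),
  ((4,7),[0,3,10]),
  ((4,8),[0,3,11]),
  ((4,9),[0,3,7]),
  ((4,10),[0,5,6]),
  ((4,11),[0,1,2]),
  ((5,6),[0,4,11]),
  ((5,7),[0,6,8]),
  ((5,8),[0,6,9]),
  ((5,9),[0,6,7]),
  ((5,10),[0,6,11]),
  ((5,11),[0,7,8]),
  ((6,7),[0,5,10]),
  ((6,8),[0,5,11]),
  ((6,9),[0,7,10]),
  ((6,10),[0,5,8]),
  ((6,11),[0,5,7]),
  ((7,8),[0,5,9]),
  ((7,9),[0,8,10]),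
  ((7,10),[0,8,11]),
  ((7,11),[0,6,10]),
  ((8,9),[0,7,11]),
  ((8,10),[0,9,11]),
  ((8,11),[1,3,6]),
  ((9,10),[1,2,11]),
  ((9,11),[1,3,7]),
  ((10,11),[0,7,9])]

def pairsL : List (Fin 12 × Fin 12) := tbl.map Prod.fst

def TL (p : Fin 12 × Fin 12) : List (Fin 12) :=
  match tbl.find? (fun e => e.1 == p) with
  | some e => e.2
  | none => []

def Tset (p : Fin 12 × Fin 12) : Finset (Fin 12) := (TL p).toFinset
def Aset (p : Fin 12 × Fin 12) : Finset (Fin 12) := {p.1, p.2}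

lemma mem_pairsL : ∀ i j : Fin 12, i < j → (i, j) ∈ pairsL := by decide

lemma D1 : ∀ p ∈ pairsL, (TL p).Nodup ∧ (TL p).length = 3 ∧ p.1 ∉ TL p ∧ p.2 ∉ TL p ∧ p.1 < p.2 := by decide

lemma F2 : (pairsL.map Tset).Nodup := by decide

lemma F3 : (pairsL.map (fun p => Aset p ∪ Tset p)).Nodup := by decide

lemma pairsL_nodup : pairsL.Nodup := F2.of_map Tset

end Sym12

namespace Sym12

def Cset (p : Fin 12 × Fin 12) : Finset (Fin 12) := Finset.univ \ (Aset p ∪ Tset p)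
def RL (p : Fin 12 × Fin 12) : List (Fin 12) := (Cset p).sort (· ≤ ·)

def c2 (p : Fin 12 × Fin 12) : G12 := Equiv.swap p.1 p.2
def c3 (p : Fin 12 × Fin 12) : G12 := (TL p).formPerm
def c7 (p : Fin 12 × Fin 12) : G12 := (RL p).formPerm
def xp (p : Fin 12 × Fin 12) : G12 := c2 p * c3 p * c7 p

variable {p : Fin 12 × Fin 12} (hp : p ∈ pairsL)

section
include hp

lemma hne12 : p.1 ≠ p.2 := ne_of_lt (D1 p hp).2.2.2.2

lemma supp_c2 : (c2 p).support = Aset p := support_swap (hne12 hp)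

lemma supp_c3 : (c3 p).support = Tset p :=
  support_formPerm_of_nodup _ (D1 p hp).1 (by
    intro x hx
    have := (D1 p hp).2.1
    rw [hx] at this
    simp at this)

lemma card_Aset : (Aset p).card = 2 := by
  rw [Aset, card_insert_of_notMem (by simp [hne12 hp]), card_singleton]

lemma card_Tset : (Tset p).card = 3 := by
  rw [Tset, List.toFinset_card_of_nodup (D1 p hp).1, (D1 p hp).2.1]

lemma disj_AT : Disjoint (Aset p) (Tset p) := by
  rw [Finset.disjoint_left]
  intro a ha hat
  rw [Aset, Finset.mem_insert, Finset.mem_singleton] at ha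
  rw [Tset, List.mem_toFinset] at hat
  rcases ha with rfl | rfl
  · exact (D1 p hp).2.2.1 hat
  · exact (D1 p hp).2.2.2.1 hat

lemma card_AT : (Aset p ∪ Tset p).card = 5 := by
  rw [card_union_of_disjoint (disj_AT hp), card_Aset hp, card_Tset hp]

lemma card_Cset : (Cset p).card = 7 := by
  rw [Cset, card_sdiff_of_subset (Finset.subset_univ _), card_AT hp]
  rfl

end

lemma disj_C_AT : Disjoint (Cset p) (Aset p ∪ Tset p) := Finset.sdiff_disjoint

lemma union_ATC : Aset p ∪ Tset p ∪ Cset p = Finset.univ := by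
  rw [Cset, Finset.union_sdiff_of_subset (Finset.subset_univ _)]

lemma RL_nodup : (RL p).Nodup := Finset.sort_nodup _ _

lemma RL_toFinset : (RL p).toFinset = Cset p := Finset.sort_toFinset _ _

section
include hp

lemma RL_length : (RL p).length = 7 := by
  rw [RL, Finset.length_sort, card_Cset hp]

lemma supp_c7 : (c7 p).support = Cset p := by
  rw [c7, support_formPerm_of_nodup _ (RL_nodup) (by
    intro x hx
    have := RL_length hp
    rw [hx] at this
    simp at this), RL_toFinset]

lemma isCycle_c2 : IsCycle (c2 p) := IsSwap.isCycle ⟨p.1, p.2, hne12 hp, rfl⟩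

lemma isCycle_c3 : IsCycle (c3 p) := isCycle_formPerm (D1 p hp).1 (by rw [(D1 p hp).2.1]; norm_num)

lemma isCycle_c7 : IsCycle (c7 p) := isCycle_formPerm (RL_nodup) (by rw [RL_length hp]; norm_num)

omit hp in
lemma c2_sq : c2 p ^ 2 = 1 := by rw [pow_two, c2, Equiv.swap_mul_self]

lemma c3_cube : c3 p ^ 3 = 1 := by
  have h := formPerm_pow_length_eq_one_of_nodup (l := TL p) (D1 p hp).1
  rwa [(D1 p hp).2.1] at h

lemma c7_pow7 : c7 p ^ 7 = 1 := by
  have h := formPerm_pow_length_eq_one_of_nodup (l := RL p) RL_nodup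
  rwa [RL_length hp] at h

lemma disj_c2_c3 : Perm.Disjoint (c2 p) (c3 p) := by
  rw [disjoint_iff_disjoint_support, supp_c2 hp, supp_c3 hp]
  exact disj_AT hp

lemma disj_c2_c7 : Perm.Disjoint (c2 p) (c7 p) := by
  rw [disjoint_iff_disjoint_support, supp_c2 hp, supp_c7 hp]
  exact (disj_C_AT.mono_right Finset.subset_union_left).symm

lemma disj_c3_c7 : Perm.Disjoint (c3 p) (c7 p) := by
  rw [disjoint_iff_disjoint_support, supp_c3 hp, supp_c7 hp]
  exact (disj_C_AT.mono_right Finset.subset_union_right).symm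

lemma xp_pow (n : ℕ) : xp p ^ n = c2 p ^ n * c3 p ^ n * c7 p ^ n := by
  rw [xp, Commute.mul_pow ((disj_c2_c7 hp).commute.mul_left (disj_c3_c7 hp).commute),
    Commute.mul_pow (disj_c2_c3 hp).commute]

lemma xp_pow21 : xp p ^ 21 = c2 p := by
  have h2 : c2 p ^ 21 = c2 p := by
    rw [show (21:ℕ) = 2*10+1 from rfl, pow_succ, pow_mul, c2_sq, one_pow, one_mul]
  have h3 : c3 p ^ 21 = 1 := by
    rw [show (21:ℕ) = 3*7 from rfl, pow_mul, c3_cube hp, one_pow]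
  have h7 : c7 p ^ 21 = 1 := by
    rw [show (21:ℕ) = 7*3 from rfl, pow_mul, c7_pow7 hp, one_pow]
  rw [xp_pow hp, h2, h3, h7, mul_one, mul_one]

lemma xp_pow6 : xp p ^ 6 = (c7 p)⁻¹ := by
  have h2 : c2 p ^ 6 = 1 := by
    rw [show (6:ℕ) = 2*3 from rfl, pow_mul, c2_sq, one_pow]
  have h3 : c3 p ^ 6 = 1 := by
    rw [show (6:ℕ) = 3*2 from rfl, pow_mul, c3_cube hp, one_pow]
  have h7 : c7 p ^ 6 = (c7 p)⁻¹ := by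
    apply eq_inv_of_mul_eq_one_left
    rw [← pow_succ]
    exact c7_pow7 hp
  rw [xp_pow hp, h2, h3, h7, one_mul, one_mul]

end

end Sym12

namespace Sym12

lemma cycle_absorb {α : Type*} [Fintype α] [DecidableEq α] {x c : Perm α} {S : Finset α}
    (hinv : ∀ b ∈ S, x b ∈ S) (hxc : ∀ b ∈ c.support, x b = c b) (hc : IsCycle c)
    {a : α} (haS : a ∈ S) (hac : a ∈ c.support) : c.support ⊆ S := by
  have key : ∀ n : ℕ, (c ^ n) a ∈ S := by
    intro n; induction n with
    | zero => simpa
    | succ n ih =>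
      have hmem : (c ^ n) a ∈ c.support := pow_apply_mem_support.mpr hac
      have h2 := hinv _ ih
      rw [hxc _ hmem] at h2
      rw [pow_succ', mul_apply]
      exact h2
  intro b hb
  obtain ⟨i, hi⟩ := hc.exists_pow_eq (mem_support.mp hac) (mem_support.mp hb)
  rw [← hi]; exact key i

variable {p q : Fin 12 × Fin 12}

lemma xp_apply_A (hp : p ∈ pairsL) {b : Fin 12} (hb : b ∈ Aset p) : xp p b = c2 p b := by
  have h7 : c7 p b = b := notMem_support.mp (by
    rw [supp_c7 hp]
    exact fun hc => Finset.disjoint_left.mp disj_C_AT hc (Finset.mem_union_left _ hb))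
  have h3 : c3 p b = b := notMem_support.mp (by
    rw [supp_c3 hp]
    exact fun hc => Finset.disjoint_left.mp (disj_AT hp) hb hc)
  simp [xp, mul_apply, h7, h3]

lemma xp_apply_T (hp : p ∈ pairsL) {b : Fin 12} (hb : b ∈ Tset p) : xp p b = c3 p b := by
  have h7 : c7 p b = b := notMem_support.mp (by
    rw [supp_c7 hp]
    exact fun hc => Finset.disjoint_left.mp disj_C_AT hc (Finset.mem_union_right _ hb))
  have h3 : c3 p b ∈ Tset p := by
    rw [← supp_c3 hp]; exact apply_mem_support.mpr (by rw [supp_c3 hp]; exact hb)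
  have h2 : c2 p (c3 p b) = c3 p b := notMem_support.mp (by
    rw [supp_c2 hp]
    exact fun hc => Finset.disjoint_left.mp (disj_AT hp) hc h3)
  simp [xp, mul_apply, h7, h2]

lemma xp_apply_C (hp : p ∈ pairsL) {b : Fin 12} (hb : b ∈ Cset p) : xp p b = c7 p b := by
  have h7 : c7 p b ∈ Cset p := by
    rw [← supp_c7 hp]; exact apply_mem_support.mpr (by rw [supp_c7 hp]; exact hb)
  have h3 : c3 p (c7 p b) = c7 p b := notMem_support.mp (by
    rw [supp_c3 hp]
    exact fun hc => Finset.disjoint_left.mp disj_C_AT h7 (Finset.mem_union_right _ hc))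
  have h2 : c2 p (c7 p b) = c7 p b := notMem_support.mp (by
    rw [supp_c2 hp]
    exact fun hc => Finset.disjoint_left.mp disj_C_AT h7 (Finset.mem_union_left _ hc))
  simp [xp, mul_apply, h3, h2]

lemma invariant_cases (hp : p ∈ pairsL) {S : Finset (Fin 12)}
    (hinv : ∀ b ∈ S, xp p b ∈ S) (hne : S.Nonempty) (hnuniv : S ≠ Finset.univ) :
    S = Aset p ∨ S = Tset p ∨ S = Cset p ∨
      S = Aset p ∪ Tset p ∨ S = Aset p ∪ Cset p ∨ S = Tset p ∪ Cset p := by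
  have bA : S ∩ Aset p = ∅ ∨ S ∩ Aset p = Aset p := by
    rcases Finset.eq_empty_or_nonempty (S ∩ Aset p) with h | ⟨a, ha⟩
    · exact Or.inl h
    · refine Or.inr ?_
      have := cycle_absorb hinv (fun b hb => xp_apply_A hp (by rwa [supp_c2 hp] at hb))
        (isCycle_c2 hp) (Finset.mem_of_mem_inter_left ha)
        (by rw [supp_c2 hp]; exact Finset.mem_of_mem_inter_right ha)
      rw [supp_c2 hp] at this
      exact Finset.inter_eq_right.mpr this
  have bT : S ∩ Tset p = ∅ ∨ S ∩ Tset p = Tset p := by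
    rcases Finset.eq_empty_or_nonempty (S ∩ Tset p) with h | ⟨a, ha⟩
    · exact Or.inl h
    · refine Or.inr ?_
      have := cycle_absorb hinv (fun b hb => xp_apply_T hp (by rwa [supp_c3 hp] at hb))
        (isCycle_c3 hp) (Finset.mem_of_mem_inter_left ha)
        (by rw [supp_c3 hp]; exact Finset.mem_of_mem_inter_right ha)
      rw [supp_c3 hp] at this
      exact Finset.inter_eq_right.mpr this
  have bC : S ∩ Cset p = ∅ ∨ S ∩ Cset p = Cset p := by
    rcases Finset.eq_empty_or_nonempty (S ∩ Cset p) with h | ⟨a, ha⟩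
    · exact Or.inl h
    · refine Or.inr ?_
      have := cycle_absorb hinv (fun b hb => xp_apply_C hp (by rwa [supp_c7 hp] at hb))
        (isCycle_c7 hp) (Finset.mem_of_mem_inter_left ha)
        (by rw [supp_c7 hp]; exact Finset.mem_of_mem_inter_right ha)
      rw [supp_c7 hp] at this
      exact Finset.inter_eq_right.mpr this
  have hdecomp : S = (S ∩ Aset p) ∪ (S ∩ Tset p) ∪ (S ∩ Cset p) := by
    rw [← Finset.inter_union_distrib_left, ← Finset.inter_union_distrib_left, union_ATC,
      Finset.inter_univ]
  rcases bA with hA | hA <;> rcases bT with hT | hT <;> rcases bC with hC | hC <;>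
    simp only [hA, hT, hC, Finset.union_empty, Finset.empty_union] at hdecomp
  · exact absurd hdecomp hne.ne_empty
  · exact Or.inr (Or.inr (Or.inl hdecomp))
  · exact Or.inr (Or.inl hdecomp)
  · exact Or.inr (Or.inr (Or.inr (Or.inr (Or.inr hdecomp))))
  · exact Or.inl hdecomp
  · exact Or.inr (Or.inr (Or.inr (Or.inr (Or.inl hdecomp))))
  · exact Or.inr (Or.inr (Or.inr (Or.inl hdecomp)))
  · exact absurd (hdecomp.trans (union_ATC)) hnuniv

lemma pair_eq (hp : p ∈ pairsL) (hq : q ∈ pairsL) (heq : Aset p = Aset q) : p = q := by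
  have l1 : p.1.1 < p.2.1 := Fin.lt_def.mp (D1 p hp).2.2.2.2
  have l2 : q.1.1 < q.2.1 := Fin.lt_def.mp (D1 q hq).2.2.2.2
  have m1 : p.1 = q.1 ∨ p.1 = q.2 := by
    have h : p.1 ∈ Aset q := heq ▸ (by simp [Aset])
    simpa [Aset] using h
  have m2 : p.2 = q.1 ∨ p.2 = q.2 := by
    have h : p.2 ∈ Aset q := heq ▸ (by simp [Aset])
    simpa [Aset] using h
  have m1' : p.1.1 = q.1.1 ∨ p.1.1 = q.2.1 := by
    rcases m1 with h | h
    exacts [Or.inl (congrArg Fin.val h), Or.inr (congrArg Fin.val h)]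
  have m2' : p.2.1 = q.1.1 ∨ p.2.1 = q.2.1 := by
    rcases m2 with h | h
    exacts [Or.inl (congrArg Fin.val h), Or.inr (congrArg Fin.val h)]
  have e1 : p.1.1 = q.1.1 ∧ p.2.1 = q.2.1 := by omega
  exact Prod.ext (Fin.ext e1.1) (Fin.ext e1.2)

lemma T_inj (hp : p ∈ pairsL) (hq : q ∈ pairsL) (heq : Tset p = Tset q) : p = q :=
  List.inj_on_of_nodup_map F2 hp hq heq

lemma U_inj (hp : p ∈ pairsL) (hq : q ∈ pairsL)
    (heq : Aset p ∪ Tset p = Aset q ∪ Tset q) : p = q :=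
  List.inj_on_of_nodup_map F3 hp hq heq

lemma compl_C : Cset p = (Aset p ∪ Tset p)ᶜ := by
  rw [Cset, Finset.compl_eq_univ_sdiff]

lemma AC_eq (hp : p ∈ pairsL) : Aset p ∪ Cset p = (Tset p)ᶜ := by
  have hd := disj_AT hp
  ext a
  have h1 : a ∈ Aset p → a ∉ Tset p := fun h h' => (Finset.disjoint_left.mp hd) h h'
  simp only [Finset.mem_union, Cset, Finset.mem_sdiff, Finset.mem_univ, true_and,
    Finset.mem_compl]
  tauto

lemma TC_eq (hp : p ∈ pairsL) : Tset p ∪ Cset p = (Aset p)ᶜ := by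
  have hd := disj_AT hp
  ext a
  have h1 : a ∈ Tset p → a ∉ Aset p := fun h h' => (Finset.disjoint_left.mp hd) h' h
  simp only [Finset.mem_union, Cset, Finset.mem_sdiff, Finset.mem_univ, true_and,
    Finset.mem_compl]
  tauto

lemma card_AC (hp : p ∈ pairsL) : (Aset p ∪ Cset p).card = 9 := by
  rw [AC_eq hp, Finset.card_compl, card_Tset hp]; rfl

lemma card_TC (hp : p ∈ pairsL) : (Tset p ∪ Cset p).card = 10 := by
  rw [TC_eq hp, Finset.card_compl, card_Aset hp]; rfl

lemma two_elt (hp : p ∈ pairsL) (hq : q ∈ pairsL) (hpq : p ≠ q)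
    {S : Finset (Fin 12)} (hne : S.Nonempty) (hnuniv : S ≠ Finset.univ)
    (hip : ∀ b ∈ S, xp p b ∈ S) (hiq : ∀ b ∈ S, xp q b ∈ S) : False := by
  have n1 := card_Aset hp; have n2 := card_Tset hp; have n3 := card_Cset hp
  have n4 := card_AT hp; have n5 := card_AC hp; have n6 := card_TC hp
  have m1 := card_Aset hq; have m2 := card_Tset hq; have m3 := card_Cset hq
  have m4 := card_AT hq; have m5 := card_AC hq; have m6 := card_TC hq
  rcases invariant_cases hp hip hne hnuniv with h|h|h|h|h|h <;>
    rcases invariant_cases hq hiq hne hnuniv with h'|h'|h'|h'|h'|h' <;>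
    (have e := h.symm.trans h') <;>
    first
      | exact hpq (pair_eq hp hq e)
      | exact hpq (T_inj hp hq e)
      | exact hpq (U_inj hp hq e)
      | exact hpq (U_inj hp hq (by rwa [compl_C (p := p), compl_C (p := q), compl_inj_iff] at e))
      | exact hpq (T_inj hp hq (by rwa [AC_eq hp, AC_eq hq, compl_inj_iff] at e))
      | exact hpq (pair_eq hp hq (by rwa [TC_eq hp, TC_eq hq, compl_inj_iff] at e))
      | (have hc := congrArg Finset.card e; simp only [n1,n2,n3,n4,n5,n6,m1,m2,m3,m4,m5,m6] at hc
         all_goals omega)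

end Sym12

namespace Sym12

lemma LB {H : Subgroup G12} {u v : Fin 12} (huv : u ≠ v) (hτ : Equiv.swap u v ∈ H)
    {s : G12} (hs : s ∈ H) (hcyc : IsCycle s) (hcard : s.support.card = 7)
    (htrans : ∀ a b : Fin 12, ∃ h ∈ H, h a = b) : H = ⊤ := by
  classical
  set Sgen : Set G12 := {g | ∃ h ∈ H, g = h * Equiv.swap u v * h⁻¹} with hSgen
  set M : Subgroup G12 := Subgroup.closure Sgen with hM
  have hswap : ∀ g ∈ Sgen, IsSwap g := by
    rintro g ⟨h, hh, rfl⟩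
    exact ⟨h u, h v, fun hee => huv (h.injective hee), (swap_apply_apply h u v).symm⟩
  have hMle : M ≤ H := by
    rw [hM, Subgroup.closure_le]
    rintro g ⟨h, hh, rfl⟩
    exact Subgroup.mul_mem _ (Subgroup.mul_mem _ hh hτ) (Subgroup.inv_mem _ hh)
  have hconj : ∀ h ∈ H, ∀ m ∈ M, h * m * h⁻¹ ∈ M := by
    intro h hh m hm
    rw [hM] at hm ⊢
    induction hm using Subgroup.closure_induction with
    | mem g hg =>
      obtain ⟨h', hh', rfl⟩ := hg
      apply Subgroup.subset_closure
      exact ⟨h * h', Subgroup.mul_mem _ hh hh', by group⟩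
    | one => simpa using Subgroup.one_mem _
    | mul a b ha hb iha ihb =>
      have hre : h * (a * b) * h⁻¹ = (h * a * h⁻¹) * (h * b * h⁻¹) := by group
      rw [hre]
      exact Subgroup.mul_mem _ iha ihb
    | inv a ha iha =>
      have hre : h * a⁻¹ * h⁻¹ = (h * a * h⁻¹)⁻¹ := by group
      rw [hre]
      exact Subgroup.inv_mem _ iha
  -- orbit finsets of M
  let Of : Fin 12 → Finset (Fin 12) := fun a => Finset.univ.filter (fun b => ∃ m ∈ M, (m : G12) a = b)
  have mem_Of : ∀ a b : Fin 12, b ∈ Of a ↔ ∃ m ∈ M, (m : G12) a = b := by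
    intro a b; simp [Of]
  have self_mem_Of : ∀ a, a ∈ Of a := fun a => (mem_Of a a).mpr ⟨1, Subgroup.one_mem _, rfl⟩
  have Of_eq_of_mem : ∀ a b, b ∈ Of a → Of b = Of a := by
    intro a b hb
    obtain ⟨m, hm, rfl⟩ := (mem_Of a b).mp hb
    ext c
    rw [mem_Of, mem_Of]
    constructor
    · rintro ⟨m', hm', rfl⟩
      exact ⟨m' * m, Subgroup.mul_mem _ hm' hm, rfl⟩
    · rintro ⟨m', hm', rfl⟩
      exact ⟨m' * m⁻¹, Subgroup.mul_mem _ hm' (Subgroup.inv_mem _ hm), by simp⟩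
  have Of_disj : ∀ a b, Of a ≠ Of b → Disjoint (Of a) (Of b) := by
    intro a b hne
    rw [Finset.disjoint_left]
    intro c hca hcb
    exact hne ((Of_eq_of_mem a c hca).symm.trans (Of_eq_of_mem b c hcb))
  have Of_smul : ∀ h ∈ H, ∀ a, Finset.image (⇑h) (Of a) = Of (h a) := by
    intro h hh a
    ext c
    simp only [Finset.mem_image, mem_Of]
    constructor
    · rintro ⟨b, hb, rfl⟩
      obtain ⟨m, hm, rfl⟩ := hb
      exact ⟨h * m * h⁻¹, hconj h hh m hm, by simp [mul_apply]⟩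
    · rintro ⟨m, hm, rfl⟩
      refine ⟨(h⁻¹ * m * h) a, ⟨h⁻¹ * m * h, ?_, rfl⟩, by simp [mul_apply]⟩
      have hcc := hconj h⁻¹ (Subgroup.inv_mem _ hh) m hm
      simpa using hcc
  have Of_card : ∀ a b : Fin 12, (Of a).card = (Of b).card := by
    intro a b
    obtain ⟨h, hh, hab⟩ := htrans a b
    rw [← hab, ← Of_smul h hh a, Finset.card_image_of_injective _ h.injective]
  have hτM : Equiv.swap u v ∈ M := by
    rw [hM]; exact Subgroup.subset_closure ⟨1, Subgroup.one_mem _, by group⟩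
  have two_le : 2 ≤ (Of u).card := by
    have hv : v ∈ Of u := (mem_Of u v).mpr ⟨Equiv.swap u v, hτM, swap_apply_left u v⟩
    exact Finset.one_lt_card.mpr ⟨u, self_mem_Of u, v, hv, huv⟩
  obtain ⟨a, ha⟩ : ∃ a, a ∈ s.support := Finset.card_pos.mp (by rw [hcard]; norm_num)
  have shift : ∀ (k : ℕ) (b c : Fin 12), Of b = Of c → Of ((s^k) b) = Of ((s^k) c) := by
    intro k b c hbc
    have hsk : (s ^ k : G12) ∈ H := Subgroup.pow_mem _ hs k
    rw [← Of_smul _ hsk b, ← Of_smul _ hsk c, hbc]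
  have s7 : s ^ 7 = 1 := by
    have ho := hcyc.orderOf
    rw [hcard] at ho
    rw [← ho]
    exact pow_orderOf_eq_one s
  have step1 : Of (s a) = Of a := by
    by_contra hne1
    have core : ∀ i j : ℕ, i < j → j < 7 → Of ((s^i) a) = Of ((s^j) a) → False := by
      intro i j hij hj7 heq
      have h1 := shift (7 - j) _ _ heq
      have e1 : (s ^ (7-j)) ((s ^ j) a) = a := by
        have : (s ^ (7-j)) * (s ^ j) = 1 := by
          rw [← pow_add, show 7 - j + j = 7 by omega, s7]
        have happ := congrArg (fun (g : G12) => g a) this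
        simpa [mul_apply] using happ
      have e2 : (s ^ (7-j)) ((s ^ i) a) = (s ^ (7 - j + i)) a := by
        rw [pow_add, mul_apply]
      rw [e1, e2] at h1
      set t := 7 - j + i with ht
      have htb : 1 ≤ t ∧ t ≤ 6 := by omega
      have iter : ∀ n : ℕ, Of ((s ^ (t*n)) a) = Of a := by
        intro n; induction n with
        | zero => simp
        | succ n ih =>
          have e3 : (s ^ (t*(n+1))) a = (s ^ (t*n)) ((s ^ t) a) := by
            rw [← mul_apply, ← pow_add]
            ring_nf
          rw [e3, shift (t*n) _ _ h1, ih]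
      obtain ⟨n, hn⟩ : ∃ n : ℕ, t * n % 7 = 1 := by
        rcases htb with ⟨ht1, ht6⟩
        interval_cases t
        · exact ⟨1, rfl⟩
        · exact ⟨4, rfl⟩
        · exact ⟨5, rfl⟩
        · exact ⟨2, rfl⟩
        · exact ⟨3, rfl⟩
        · exact ⟨6, rfl⟩
      have e4 : s ^ (t*n) = s := by
        rw [show t*n = 7*(t*n/7) + 1 by omega, pow_add, pow_mul, s7, one_pow, one_mul, pow_one]
      have := iter n
      rw [e4] at this
      exact hne1 this
    have hdist : ∀ i j : Fin 7, i ≠ j → Of ((s^(i:ℕ)) a) ≠ Of ((s^(j:ℕ)) a) := by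
      intro i j hij heq
      rcases lt_or_gt_of_ne (fun hv => hij (Fin.ext hv) : (i:ℕ) ≠ (j:ℕ)) with hlt | hgt
      · exact core i j hlt j.isLt heq
      · exact core j i hgt i.isLt heq.symm
    have hsum : ((Finset.univ : Finset (Fin 7)).biUnion (fun i => Of ((s^(i:ℕ)) a))).card
        = ∑ i : Fin 7, (Of ((s^(i:ℕ)) a)).card := by
      apply Finset.card_biUnion
      intro i _ j _ hij
      exact Of_disj _ _ (hdist i j hij)
    have hle12 : ((Finset.univ : Finset (Fin 7)).biUnion (fun i => Of ((s^(i:ℕ)) a))).card ≤ 12 :=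
      le_trans (Finset.card_le_univ _) (by simp)
    have hterm : ∀ i : Fin 7, (Of ((s^(i:ℕ)) a)).card = (Of u).card := fun i => Of_card _ _
    rw [hsum] at hle12
    rw [Finset.sum_congr rfl (fun i _ => hterm i), Finset.sum_const, Finset.card_univ] at hle12
    simp only [Fintype.card_fin, smul_eq_mul] at hle12
    omega
  have step2 : ∀ k : ℕ, Of ((s^k) a) = Of a := by
    intro k; induction k with
    | zero => simp
    | succ k ih =>
      have e3 : (s ^ (k+1)) a = (s ^ k) (s a) := by
        rw [← mul_apply, ← pow_succ]
      rw [e3, shift k _ _ step1, ih]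
  have step3 : s.support ⊆ Of a := by
    intro b hb
    obtain ⟨i, hi⟩ := hcyc.exists_pow_eq (mem_support.mp ha) (mem_support.mp hb)
    have hmem := self_mem_Of ((s^i) a)
    rw [step2 i] at hmem
    rwa [← hi]
  have seven_le : 7 ≤ (Of a).card := by
    rw [← hcard]
    exact Finset.card_le_card step3
  have Of_a_univ : Of a = Finset.univ := by
    by_contra hne2
    obtain ⟨c, hc⟩ : ∃ c, c ∉ Of a := by
      by_contra hall
      push_neg at hall
      exact hne2 (Finset.eq_univ_iff_forall.mpr hall)
    have hOfne : Of c ≠ Of a := fun he => hc (he ▸ self_mem_Of c)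
    have hdisj := Of_disj c a hOfne
    have hcu : (Of c ∪ Of a).card = (Of c).card + (Of a).card :=
      Finset.card_union_of_disjoint hdisj
    have h1 : (Of c).card = (Of a).card := Of_card c a
    have h2 : (Of c ∪ Of a).card ≤ 12 := le_trans (Finset.card_le_univ _) (by simp)
    omega
  have hpre : MulAction.IsPretransitive M (Fin 12) := by
    constructor
    intro b c
    have hb : b ∈ Of a := Of_a_univ ▸ Finset.mem_univ b
    have hc : c ∈ Of a := Of_a_univ ▸ Finset.mem_univ c
    obtain ⟨m1, hm1, hm1e⟩ := (mem_Of a b).mp hb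
    obtain ⟨m2, hm2, hm2e⟩ := (mem_Of a c).mp hc
    refine ⟨⟨m2 * m1⁻¹, Subgroup.mul_mem _ hm2 (Subgroup.inv_mem _ hm1)⟩, ?_⟩
    show (m2 * m1⁻¹ : G12) • b = c
    rw [Equiv.Perm.smul_def, mul_apply, ← hm1e, ← hm2e]
    simp
  rw [hM] at hpre
  haveI := hpre
  have htop : Subgroup.closure Sgen = ⊤ := closure_of_isSwap_of_isPretransitive hswap
  rw [hM] at hMle
  rw [htop] at hMle
  exact top_unique hMle

end Sym12

namespace Sym12

variable {p q : Fin 12 × Fin 12}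

lemma K_trans {K : Subgroup G12} (hc : finRotate 12 ∈ K) : ∀ a b : Fin 12, ∃ h ∈ K, h a = b := by
  intro a b
  have hsup : ∀ x : Fin 12, finRotate 12 x ≠ x := by
    intro x
    have hm : x ∈ support (finRotate 12) := by
      rw [support_finRotate_of_le (by norm_num)]
      exact Finset.mem_univ x
    exact mem_support.mp hm
  obtain ⟨i, hi⟩ := (isCycle_finRotate_of_le (n := 12) (by norm_num)).exists_pow_eq (hsup a) (hsup b)
  exact ⟨(finRotate 12)^i, Subgroup.pow_mem _ hc i, hi⟩

lemma LB' {H : Subgroup G12} (hp : p ∈ pairsL) (hx : xp p ∈ H)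
    (htrans : ∀ a b : Fin 12, ∃ h ∈ H, h a = b) : H = ⊤ := by
  have h21 : Equiv.swap p.1 p.2 ∈ H := by
    have hm := Subgroup.pow_mem H hx 21
    rwa [xp_pow21 hp, c2] at hm
  have h6 : (c7 p)⁻¹ ∈ H := by
    have hm := Subgroup.pow_mem H hx 6
    rwa [xp_pow6 hp] at hm
  exact LB (hne12 hp) h21 h6 ((isCycle_c7 hp).inv)
    (by rw [support_inv, supp_c7 hp, card_Cset hp]) htrans

lemma exists_orbit {H : Subgroup G12} (hH : H ≠ ⊤) (hp : p ∈ pairsL) (hx : xp p ∈ H) :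
    ∃ S : Finset (Fin 12), S.Nonempty ∧ S ≠ Finset.univ ∧ ∀ h ∈ H, ∀ b ∈ S, h b ∈ S := by
  classical
  have hnt : ¬ ∀ a b : Fin 12, ∃ h ∈ H, h a = b := fun ht => hH (LB' hp hx ht)
  push_neg at hnt
  obtain ⟨a, b, hab⟩ := hnt
  refine ⟨Finset.univ.filter (fun c => ∃ h ∈ H, h a = c), ⟨a, ?_⟩, ?_, ?_⟩
  · simp only [Finset.mem_filter, Finset.mem_univ, true_and]
    exact ⟨1, Subgroup.one_mem _, rfl⟩
  · intro he
    have hb : b ∈ Finset.univ.filter (fun c => ∃ h ∈ H, h a = c) := by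
      rw [he]; exact Finset.mem_univ b
    simp only [Finset.mem_filter, Finset.mem_univ, true_and] at hb
    obtain ⟨h, hh, hhe⟩ := hb
    exact hab h hh hhe
  · intro h hh c hc
    simp only [Finset.mem_filter, Finset.mem_univ, true_and] at hc ⊢
    obtain ⟨h', hh', rfl⟩ := hc
    exact ⟨h * h', Subgroup.mul_mem _ hh hh', mul_apply _ _ _⟩

lemma card_pairs_subtype : Fintype.card {p : Fin 12 × Fin 12 // p ∈ pairsL} = 66 := by
  decide

lemma cover_card {𝒮 : Finset (Subgroup G12)} (hcov : IsCover 𝒮) : 67 ≤ 𝒮.card := by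
  classical
  have hx : ∀ p : {p : Fin 12 × Fin 12 // p ∈ pairsL},
      ∃ H : Subgroup G12, H ∈ 𝒮 ∧ xp p.1 ∈ H := by
    intro p
    obtain ⟨H, h1, h2⟩ := hcov.2 (xp p.1)
    exact ⟨H, h1, h2⟩
  choose f hf1 hf2 using hx
  obtain ⟨K, hK1, hK2⟩ := hcov.2 (finRotate 12)
  let F : Option {p : Fin 12 × Fin 12 // p ∈ pairsL} → {H : Subgroup G12 // H ∈ 𝒮} :=
    fun o => match o with
      | none => ⟨K, hK1⟩
      | some p => ⟨f p, hf1 p⟩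
  have hFinj : Function.Injective F := by
    rintro (_|p) (_|q) hFe <;> simp only [F, Subtype.mk.injEq] at hFe
    · rfl
    · exfalso
      have hxq : xp q.1 ∈ K := by rw [hFe] at *; exact hf2 q
      exact hcov.1 K hK1 (LB' q.2 hxq (K_trans hK2))
    · exfalso
      have hxp : xp p.1 ∈ K := by rw [← hFe] at *; exact hf2 p
      exact hcov.1 K hK1 (LB' p.2 hxp (K_trans hK2))
    · by_contra hne
      have hpq : p.1 ≠ q.1 := fun he => hne (by rw [Subtype.ext he])
      have hxp : xp p.1 ∈ f p := hf2 p
      have hxq : xp q.1 ∈ f p := by rw [hFe]; exact hf2 q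
      obtain ⟨S, hS1, hS2, hS3⟩ := exists_orbit (hcov.1 _ (hf1 p)) p.2 hxp
      exact two_elt p.2 q.2 hpq hS1 hS2
        (fun b hb => hS3 _ hxp b hb) (fun b hb => hS3 _ hxq b hb)
  have hle := Fintype.card_le_of_injective F hFinj
  rw [Fintype.card_coe, Fintype.card_option, card_pairs_subtype] at hle
  exact hle

end Sym12

/-- The symmetric group on `12` letters satisfies `σ(Sym(12)) ≥ 67`. -/
theorem groupSigma_sym12 :
    (67 : ℕ∞) ≤ groupSigma (Equiv.Perm (Fin 12)) := by
  apply le_sInf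
  rintro n ⟨𝒮, hcov, rfl⟩
  exact_mod_cast Sym12.cover_card hcov
end
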